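/- Consider n agents with cost functions c_i : [0,1] → [0,∞), c_i(0) = 0, such that x − c_i(x) attains its maximum y_i over [0,1] at a point x_i, and suppose y_1 ≤ y_2 ≤ … ≤ y_n. Fix i ∈ {1,…,n} and define the payment function t_i(x) = max(0, x − y_i) on [0,1]. Then there exists, for each agent i' ∈ {1,…,n}, a best response x''_{i'} to t_i (namely x''_{i'} = x_{i'} for i' ≥ i and x''_{i'} = 0 for i' < i) such that the principal's payoff satisfies Σ_{i'=1}^n ( x''_{i'} − t_i(x''_{i'}) ) ≥ (n − i + 1)·y_i. -/

import Mathlib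

/-- With `y_1 ≤ … ≤ y_n` and payment function `t_i(x) = max(0, x - y_i)`, there
are best responses (namely `x_{i'}` for agents `i' ≥ i` and `0` for agents `i' < i`) under which
the principal's payoff is at least `(n - i + 1)·y_i`. -/
theorem stmt_10 (n : ℕ) (c : ℕ → ℝ → ℝ) (y xm : ℕ → ℝ) (i : ℕ)
    (hc0 : ∀ i', 1 ≤ i' → i' ≤ n → c i' 0 = 0)
    (hcnn : ∀ i', 1 ≤ i' → i' ≤ n → ∀ x ∈ Set.Icc (0:ℝ) 1, 0 ≤ c i' x)
    (hxm : ∀ i', 1 ≤ i' → i' ≤ n → xm i' ∈ Set.Icc (0:ℝ) 1 ∧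
      xm i' - c i' (xm i') = y i' ∧ ∀ x ∈ Set.Icc (0:ℝ) 1, x - c i' x ≤ y i')
    (hymono : ∀ i', 1 ≤ i' → i' < n → y i' ≤ y (i' + 1))
    (hi1 : 1 ≤ i) (hin : i ≤ n)
    (t : ℝ → ℝ) (ht : ∀ x ∈ Set.Icc (0:ℝ) 1, t x = max 0 (x - y i)) :
    ∃ xs : ℕ → ℝ,
      (∀ i', 1 ≤ i' → i' ≤ n → xs i' = if i ≤ i' then xm i' else 0) ∧
      (∀ i', 1 ≤ i' → i' ≤ n → xs i' ∈ Set.Icc (0:ℝ) 1 ∧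
        ∀ x ∈ Set.Icc (0:ℝ) 1, t x - c i' x ≤ t (xs i') - c i' (xs i')) ∧
      ((n : ℝ) - i + 1) * y i ≤ ∑ i' ∈ Finset.Icc 1 n, (xs i' - t (xs i')) := by
  -- monotonicity of y on [1, n]
  have hymono' : ∀ a b, 1 ≤ a → a ≤ b → b ≤ n → y a ≤ y b := by
    intro a b ha hab hbn
    induction b with
    | zero => omega
    | succ m ih =>
      rcases Nat.eq_or_lt_of_le hab with h | h
      · rw [h]
      · have hm : a ≤ m := by omega
        have h1 : 1 ≤ m := le_trans ha hm
        exact le_trans (ih hm (by omega)) (hymono m h1 (by omega))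
  have h0mem : (0:ℝ) ∈ Set.Icc (0:ℝ) 1 := ⟨le_rfl, zero_le_one⟩
  have hy0 : 0 ≤ y i := by
    have h := (hxm i hi1 hin).2.2 0 h0mem
    rw [hc0 i hi1 hin] at h
    linarith
  have ht0 : t 0 = 0 := by
    rw [ht 0 h0mem]
    rw [max_eq_left (by linarith)]
  refine ⟨fun i' => if i ≤ i' then xm i' else 0, fun _ _ _ => rfl, ?_, ?_⟩
  · intro i' h1 hn
    obtain ⟨hmem, heq, hmax⟩ := hxm i' h1 hn
    by_cases hii : i ≤ i'
    · simp only [if_pos hii]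
      refine ⟨hmem, ?_⟩
      intro x hx
      have hyy : y i ≤ y i' := hymono' i i' hi1 hii hn
      have hcx := hcnn i' h1 hn x hx
      have hcm := hcnn i' h1 hn (xm i') hmem
      have hxy : x - c i' x ≤ y i' := hmax x hx
      rw [ht x hx, ht (xm i') hmem]
      have hRHS : y i' - y i ≤ max 0 (xm i' - y i) - c i' (xm i') := by
        have := le_max_right 0 (xm i' - y i)
        linarith
      rcases le_total (x - y i) 0 with h | h
      · rw [max_eq_left h]; linarith
      · rw [max_eq_right h]; linarith
    · simp only [if_neg hii]
      refine ⟨h0mem, ?_⟩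
      intro x hx
      have hyy : y i' ≤ y i := hymono' i' i h1 (le_of_not_ge hii) hin
      have hcx := hcnn i' h1 hn x hx
      have hxy : x - c i' x ≤ y i' := hmax x hx
      rw [ht x hx, ht0, hc0 i' h1 hn]
      rcases le_total (x - y i) 0 with h | h
      · rw [max_eq_left h]; linarith
      · rw [max_eq_right h]; linarith
  · have hterm : ∀ i' ∈ Finset.Icc 1 n, (if i ≤ i' then y i else 0) ≤
        ((if i ≤ i' then xm i' else 0) - t (if i ≤ i' then xm i' else 0)) := by
      intro i' hmem
      rw [Finset.mem_Icc] at hmem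
      by_cases hii : i ≤ i'
      · simp only [if_pos hii]
        obtain ⟨hm, heq, hmax⟩ := hxm i' hmem.1 hmem.2
        have hc := hcnn i' hmem.1 hmem.2 (xm i') hm
        have hyy : y i ≤ y i' := hymono' i i' hi1 hii hmem.2
        rw [ht (xm i') hm]
        rcases le_total (xm i' - y i) 0 with h | h
        · rw [max_eq_left h]; linarith
        · rw [max_eq_right h]; linarith
      · simp [if_neg hii, ht0]
    calc ((n : ℝ) - i + 1) * y i
        = ∑ i' ∈ Finset.Icc 1 n, (if i ≤ i' then y i else 0) := by
          rw [← Finset.sum_filter]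
          have hfil : (Finset.Icc 1 n).filter (fun i' => i ≤ i') = Finset.Icc i n := by
            ext a
            simp only [Finset.mem_filter, Finset.mem_Icc]
            omega
          rw [hfil, Finset.sum_const, Nat.card_Icc, nsmul_eq_mul]
          have : ((n + 1 - i : ℕ) : ℝ) = (n : ℝ) - i + 1 := by
            have : (i : ℝ) ≤ (n : ℝ) := by exact_mod_cast hin
            push_cast [Nat.cast_sub (by omega : i ≤ n + 1)]
            ring
          rw [this]
      _ ≤ _ := Finset.sum_le_sum hterm
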